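/- Fix a ≥ 0, b ≥ 0, set β = exp(b/k_BT), and let f : ℝ² → ℝ be measurable with 0 ≤ f(k) ≤ 1 for all k and such that k ↦ ε(k)·f(k) is integrable over ℝ². Then lim_{ξ → +∞} ∫_{ℝ²} λ(ε(k), ξ; a, b; f(k)) dk = − ∫_{ℝ²} [ (a+1)(ε(k)+b)·β⁻¹ + a·β·[ε(k)−b]₊ ] · f(k) dk; in particular, if f is not almost everywhere equal to 0, this limit is strictly negative. -/

import Mathlib

/-- `ψ(ε,ξ;a,b) = (a+1)(ε+b)/(1 + ξ·e^{(ε+b)/k_BT}) + a[ε−b]₊/(1 + ξ·e^{[ε−b]₊/k_BT})`. -/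
noncomputable def psi (kBT ε ξ a b : ℝ) : ℝ :=
  (a + 1) * (ε + b) / (1 + ξ * Real.exp ((ε + b) / kBT)) +
    a * max (ε - b) 0 / (1 + ξ * Real.exp (max (ε - b) 0 / kBT))

/-- `λ(ε,ξ;a,b;φ) = ψ(ε,ξ;a,b)·(1 − φ·(1 + ξ·e^{ε/k_BT}))`. -/
noncomputable def lam (kBT ε ξ a b φ : ℝ) : ℝ :=
  psi kBT ε ξ a b * (1 - φ * (1 + ξ * Real.exp (ε / kBT)))


open MeasureTheory Filter

section Aux

lemma aux_x_exp (x c : ℝ) (hx : 0 ≤ x) (hc : 0 < c) :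
    x * Real.exp (-(x / c)) ≤ c := by
  have h := Real.add_one_le_exp (x / c)
  have he := Real.exp_pos (x / c)
  rw [Real.exp_neg, mul_inv_le_iff₀ he]
  nlinarith [mul_le_mul_of_nonneg_left h hc.le, mul_div_cancel₀ x hc.ne']

lemma aux_tendsto_div (A E : ℝ) (hE : 0 < E) :
    Tendsto (fun ξ : ℝ => A / (1 + ξ * E)) atTop (nhds 0) := by
  have h : Tendsto (fun ξ : ℝ => 1 + ξ * E) atTop atTop :=
    tendsto_atTop_add_const_left _ 1 (Tendsto.atTop_mul_const hE tendsto_id)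
  simpa [div_eq_mul_inv] using h.inv_tendsto_atTop.const_mul A

lemma aux_tendsto_xi_div (A E : ℝ) (hE : 0 < E) :
    Tendsto (fun ξ : ℝ => ξ * A / (1 + ξ * E)) atTop (nhds (A / E)) := by
  have h1 : Tendsto (fun ξ : ℝ => ξ⁻¹ + E) atTop (nhds (0 + E)) :=
    tendsto_inv_atTop_zero.add_const E
  have h2 : Tendsto (fun ξ : ℝ => (ξ⁻¹ + E)⁻¹ * A) atTop (nhds ((0 + E)⁻¹ * A)) :=
    (h1.inv₀ (by positivity)).mul_const A
  have h3 : (0 + E)⁻¹ * A = A / E := by field_simp; ring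
  rw [h3] at h2
  refine h2.congr' ?_
  filter_upwards [eventually_gt_atTop (0 : ℝ)] with ξ hξ
  have hne : ξ ≠ 0 := hξ.ne'
  have h4 : ξ⁻¹ + E = (1 + ξ * E) / ξ := by field_simp
  rw [h4, inv_div, div_mul_eq_mul_div]

/-- pointwise limit of `lam` as `ξ → ∞`. -/
lemma lam_tendsto (kBT a b φ ε : ℝ) (hkBT : 0 < kBT) :
    Tendsto (fun ξ : ℝ => lam kBT ε ξ a b φ) atTop
      (nhds (-(((a + 1) * (ε + b) * (Real.exp (b / kBT))⁻¹ +
        a * Real.exp (b / kBT) * max (ε - b) 0) * φ))) := by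
  set m := max (ε - b) 0 with hm
  set E0 := Real.exp (ε / kBT) with hE0
  set E1 := Real.exp ((ε + b) / kBT) with hE1
  set E2 := Real.exp (m / kBT) with hE2
  have hE1p : 0 < E1 := Real.exp_pos _
  have hE2p : 0 < E2 := Real.exp_pos _
  have key : Tendsto (fun ξ : ℝ =>
      ((a + 1) * (ε + b) / (1 + ξ * E1) + a * m / (1 + ξ * E2)) * (1 - φ)
      - φ * (ξ * ((a + 1) * (ε + b) * E0) / (1 + ξ * E1))
      - φ * (ξ * (a * m * E0) / (1 + ξ * E2))) atTop
      (nhds (((0 : ℝ) + 0) * (1 - φ) - φ * ((a + 1) * (ε + b) * E0 / E1)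
        - φ * (a * m * E0 / E2))) :=
    ((((aux_tendsto_div _ _ hE1p).add (aux_tendsto_div _ _ hE2p)).mul_const _).sub
      ((aux_tendsto_xi_div _ _ hE1p).const_mul φ)).sub
      ((aux_tendsto_xi_div _ _ hE2p).const_mul φ)
  have heq : ∀ ξ : ℝ, lam kBT ε ξ a b φ =
      ((a + 1) * (ε + b) / (1 + ξ * E1) + a * m / (1 + ξ * E2)) * (1 - φ)
      - φ * (ξ * ((a + 1) * (ε + b) * E0) / (1 + ξ * E1))
      - φ * (ξ * (a * m * E0) / (1 + ξ * E2)) := by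
    intro ξ
    unfold lam psi
    rw [← hm, ← hE0, ← hE1, ← hE2]
    ring
  have hlim : ((0 : ℝ) + 0) * (1 - φ) - φ * ((a + 1) * (ε + b) * E0 / E1)
      - φ * (a * m * E0 / E2)
      = -(((a + 1) * (ε + b) * (Real.exp (b / kBT))⁻¹ +
        a * Real.exp (b / kBT) * m) * φ) := by
    have e1 : E0 / E1 = (Real.exp (b / kBT))⁻¹ := by
      rw [hE0, hE1, ← Real.exp_sub, ← Real.exp_neg]
      congr 1
      field_simp
      ring
    have e2 : m * (E0 / E2) = m * Real.exp (b / kBT) := by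
      rcases le_or_gt ε b with h | h
      · have : m = 0 := by rw [hm]; exact max_eq_right (by linarith)
        rw [this]; ring
      · have hmeq : m = ε - b := by rw [hm]; exact max_eq_left (by linarith)
        congr 1
        rw [hE0, hE2, ← Real.exp_sub, hmeq]
        congr 1
        field_simp
        ring
    calc ((0 : ℝ) + 0) * (1 - φ) - φ * ((a + 1) * (ε + b) * E0 / E1)
          - φ * (a * m * E0 / E2)
        = -(((a + 1) * (ε + b) * (E0 / E1) +
            a * (m * (E0 / E2))) * φ) := by ring
      _ = _ := by rw [e1, e2]; ring
  have h := key.congr (fun ξ => (heq ξ).symm)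
  rwa [hlim] at h


lemma aux_decay (kBT x y : ℝ) (hkBT : 0 < kBT) (hx : 0 ≤ x) (hy : y ≤ x) :
    x * (Real.exp (x / kBT))⁻¹ ≤ 2 * kBT * Real.exp (-(y / (2 * kBT))) := by
  have hsplit : (Real.exp (x / kBT))⁻¹ =
      Real.exp (-(x / (2 * kBT))) * Real.exp (-(x / (2 * kBT))) := by
    rw [← Real.exp_add, ← Real.exp_neg]
    congr 1
    field_simp
    ring
  rw [hsplit, ← mul_assoc]
  have h2 := aux_x_exp x (2 * kBT) hx (by linarith)
  calc x * Real.exp (-(x / (2 * kBT))) * Real.exp (-(x / (2 * kBT)))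
      ≤ 2 * kBT * Real.exp (-(x / (2 * kBT))) :=
        mul_le_mul_of_nonneg_right h2 (Real.exp_pos _).le
    _ ≤ 2 * kBT * Real.exp (-(y / (2 * kBT))) := by
        apply mul_le_mul_of_nonneg_left _ (by linarith)
        apply Real.exp_le_exp.mpr
        have : y / (2 * kBT) ≤ x / (2 * kBT) := by gcongr
        linarith

set_option maxHeartbeats 1000000 in
/-- uniform bound on `|lam|` for `ξ ≥ 1`. -/
lemma lam_abs_le (kBT a b φ ε ξ : ℝ) (hkBT : 0 < kBT) (ha : 0 ≤ a) (hb : 0 ≤ b)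
    (hε : 0 ≤ ε) (hφ0 : 0 ≤ φ) (hφ1 : φ ≤ 1) (hξ : 1 ≤ ξ) :
    |lam kBT ε ξ a b φ| ≤
      (2 * kBT * (a + 1) + 2 * kBT * a * Real.exp (b / (2 * kBT))) *
        Real.exp (-(ε / (2 * kBT)))
      + ((a + 1) * (ε + b) * (Real.exp (b / kBT))⁻¹ +
          a * Real.exp (b / kBT) * max (ε - b) 0) * φ := by
  set m := max (ε - b) 0 with hm
  set E0 := Real.exp (ε / kBT) with hE0
  set E1 := Real.exp ((ε + b) / kBT) with hE1
  set E2 := Real.exp (m / kBT) with hE2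
  have hE0p : 0 < E0 := Real.exp_pos _
  have hE1p : 0 < E1 := Real.exp_pos _
  have hE2p : 0 < E2 := Real.exp_pos _
  clear_value m E0 E1 E2
  have hξ0 : 0 < ξ := by linarith
  have hm0 : 0 ≤ m := hm ▸ le_max_right _ _
  have hmge : ε - b ≤ m := hm ▸ le_max_left _ _
  have hden1 : 0 < 1 + ξ * E1 := by nlinarith
  have hden2 : 0 < 1 + ξ * E2 := by nlinarith
  have hpsi0 : 0 ≤ psi kBT ε ξ a b := by
    unfold psi
    rw [← hm, ← hE1, ← hE2]
    have h1 : 0 ≤ (a + 1) * (ε + b) / (1 + ξ * E1) :=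
      div_nonneg (by nlinarith) hden1.le
    have h2 : 0 ≤ a * m / (1 + ξ * E2) := div_nonneg (by nlinarith) hden2.le
    linarith
  have h1 : |1 - φ * (1 + ξ * E0)| ≤ 1 + φ * (ξ * E0) := by
    have he : 1 - φ * (1 + ξ * E0) = (1 - φ) - φ * (ξ * E0) := by ring
    rw [he]
    calc |(1 - φ) - φ * (ξ * E0)| ≤ |1 - φ| + |φ * (ξ * E0)| := abs_sub _ _
      _ = (1 - φ) + φ * (ξ * E0) := by
          rw [abs_of_nonneg (by linarith), abs_of_nonneg (by positivity)]
      _ ≤ 1 + φ * (ξ * E0) := by linarith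
  have habs : |lam kBT ε ξ a b φ| ≤ psi kBT ε ξ a b * (1 + φ * (ξ * E0)) := by
    unfold lam
    rw [← hE0, abs_mul, abs_of_nonneg hpsi0]
    exact mul_le_mul_of_nonneg_left h1 hpsi0
  -- bound psi itself
  have hA : psi kBT ε ξ a b ≤
      (2 * kBT * (a + 1) + 2 * kBT * a * Real.exp (b / (2 * kBT))) *
        Real.exp (-(ε / (2 * kBT))) := by
    unfold psi
    rw [← hm, ← hE1, ← hE2]
    have hd1 := aux_decay kBT (ε + b) ε hkBT (by linarith) (by linarith)
    have hd2 := aux_decay kBT m (ε - b) hkBT hm0 hmge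
    have t1 : (a + 1) * (ε + b) / (1 + ξ * E1) ≤
        2 * kBT * (a + 1) * Real.exp (-(ε / (2 * kBT))) := by
      calc (a + 1) * (ε + b) / (1 + ξ * E1) ≤ (a + 1) * (ε + b) / E1 := by
            apply div_le_div_of_nonneg_left (by nlinarith) hE1p
            nlinarith
        _ = (a + 1) * ((ε + b) * E1⁻¹) := by rw [div_eq_mul_inv, mul_assoc]
        _ ≤ (a + 1) * (2 * kBT * Real.exp (-(ε / (2 * kBT)))) := by
            apply mul_le_mul_of_nonneg_left _ (by linarith)
            rw [hE1]; exact hd1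
        _ = 2 * kBT * (a + 1) * Real.exp (-(ε / (2 * kBT))) := by ring
    have hsplit : Real.exp (-((ε - b) / (2 * kBT))) =
        Real.exp (b / (2 * kBT)) * Real.exp (-(ε / (2 * kBT))) := by
      rw [← Real.exp_add]
      congr 1
      field_simp
      ring
    have t2 : a * m / (1 + ξ * E2) ≤
        2 * kBT * a * Real.exp (b / (2 * kBT)) * Real.exp (-(ε / (2 * kBT))) := by
      calc a * m / (1 + ξ * E2) ≤ a * m / E2 := by
            apply div_le_div_of_nonneg_left (by nlinarith) hE2p
            nlinarith
        _ = a * (m * E2⁻¹) := by rw [div_eq_mul_inv, mul_assoc]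
        _ ≤ a * (2 * kBT * Real.exp (-((ε - b) / (2 * kBT)))) := by
            apply mul_le_mul_of_nonneg_left _ ha
            rw [hE2]; exact hd2
        _ = 2 * kBT * a * Real.exp (b / (2 * kBT)) * Real.exp (-(ε / (2 * kBT))) := by
            rw [hsplit]; ring
    calc (a + 1) * (ε + b) / (1 + ξ * E1) + a * m / (1 + ξ * E2)
        ≤ 2 * kBT * (a + 1) * Real.exp (-(ε / (2 * kBT))) +
          2 * kBT * a * Real.exp (b / (2 * kBT)) * Real.exp (-(ε / (2 * kBT))) :=
          add_le_add t1 t2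
      _ = _ := by ring
  -- bound psi * (ξ * E0)
  have hB : psi kBT ε ξ a b * (ξ * E0) ≤
      (a + 1) * (ε + b) * (Real.exp (b / kBT))⁻¹ +
        a * Real.exp (b / kBT) * m := by
    unfold psi
    rw [← hm, ← hE1, ← hE2, add_mul]
    have hβ : (Real.exp (b / kBT))⁻¹ = E0 / E1 := by
      rw [hE0, hE1, eq_div_iff (Real.exp_pos _).ne', ← Real.exp_neg, ← Real.exp_add]
      congr 1
      field_simp
      ring
    have t1 : (a + 1) * (ε + b) / (1 + ξ * E1) * (ξ * E0) ≤
        (a + 1) * (ε + b) * (Real.exp (b / kBT))⁻¹ := by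
      rw [hβ, div_mul_eq_mul_div, ← mul_div_assoc, div_le_div_iff₀ hden1 hE1p]
      have hq : 0 ≤ (a + 1) * (ε + b) * E0 := mul_nonneg (mul_nonneg
        (by linarith) (by linarith)) hE0p.le
      linarith [hq]
    have hE0le : E0 ≤ Real.exp (b / kBT) * E2 := by
      rw [hE0, hE2, ← Real.exp_add]
      apply Real.exp_le_exp.mpr
      rw [← add_div]
      gcongr
      linarith
    have t2 : a * m / (1 + ξ * E2) * (ξ * E0) ≤ a * Real.exp (b / kBT) * m := by
      rw [div_mul_eq_mul_div, div_le_iff₀ hden2]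
      calc a * m * (ξ * E0) ≤ a * m * (ξ * (Real.exp (b / kBT) * E2)) := by
            apply mul_le_mul_of_nonneg_left _ (mul_nonneg ha hm0)
            exact mul_le_mul_of_nonneg_left hE0le hξ0.le
        _ = a * Real.exp (b / kBT) * m * (ξ * E2) := by ring
        _ ≤ a * Real.exp (b / kBT) * m * (1 + ξ * E2) := by
            apply mul_le_mul_of_nonneg_left (by linarith)
              (mul_nonneg (mul_nonneg ha (Real.exp_pos _).le) hm0)
    exact add_le_add t1 t2
  calc |lam kBT ε ξ a b φ| ≤ psi kBT ε ξ a b * (1 + φ * (ξ * E0)) := habs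
    _ = psi kBT ε ξ a b + psi kBT ε ξ a b * (ξ * E0) * φ := by ring
    _ ≤ _ := by
        have h2 : psi kBT ε ξ a b * (ξ * E0) * φ ≤
            ((a + 1) * (ε + b) * (Real.exp (b / kBT))⁻¹ +
              a * Real.exp (b / kBT) * m) * φ :=
          mul_le_mul_of_nonneg_right hB hφ0
        linarith

open FiniteDimensional in
lemma aux_int_exp (c : ℝ) (hc : 0 < c) :
    Integrable (fun k : EuclideanSpace ℝ (Fin 2) => Real.exp (-(c * ‖k‖))) volume := by
  have hdim : ((Module.finrank ℝ (EuclideanSpace ℝ (Fin 2)) : ℝ)) < 3 := by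
    rw [finrank_euclideanSpace]
    norm_num
  have h1 : Integrable (fun x : EuclideanSpace ℝ (Fin 2) => (1 + ‖x‖) ^ (-(3:ℝ)))
      volume := integrable_one_add_norm hdim
  refine (h1.const_mul (Real.exp c * 6 / c ^ 3)).mono'
    (Measurable.aestronglyMeasurable (by fun_prop)) (ae_of_all _ fun k => ?_)
  set t := ‖k‖ with ht
  have ht0 : 0 ≤ t := norm_nonneg k
  rw [Real.norm_eq_abs, abs_of_pos (Real.exp_pos _)]
  have h3 : (1 + t) ^ (-(3:ℝ)) = ((1 + t) ^ (3:ℕ))⁻¹ := by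
    rw [← Real.rpow_natCast (1 + t) 3, ← Real.rpow_neg (by positivity)]
    norm_num
  rw [h3, ← div_eq_mul_inv, le_div_iff₀ (by positivity)]
  have h2 : (c * (1 + t)) ^ 3 / 6 ≤ Real.exp (c * (1 + t)) := by
    have := Real.pow_div_factorial_le_exp (x := c * (1 + t)) (by positivity) 3
    norm_num [Nat.factorial] at this
    convert this using 2
  have h4 : (1 + t) ^ (3:ℕ) ≤ 6 / c ^ 3 * Real.exp (c * (1 + t)) := by
    rw [div_mul_eq_mul_div, le_div_iff₀ (by positivity)]
    calc (1 + t) ^ (3:ℕ) * c ^ 3 = (c * (1 + t)) ^ 3 := by ring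
      _ ≤ 6 * Real.exp (c * (1 + t)) := by linarith
  have h5 : Real.exp (c * (1 + t)) = Real.exp c * Real.exp (c * t) := by
    rw [← Real.exp_add]; ring_nf
  have h6 : Real.exp (-(c * t)) * Real.exp (c * t) = 1 := by
    rw [← Real.exp_add]; simp
  calc Real.exp (-(c * t)) * (1 + t) ^ (3:ℕ)
      ≤ Real.exp (-(c * t)) * (6 / c ^ 3 * (Real.exp c * Real.exp (c * t))) := by
        apply mul_le_mul_of_nonneg_left _ (Real.exp_pos _).le
        rw [← h5]; exact h4
    _ = Real.exp c * 6 / c ^ 3 * (Real.exp (-(c * t)) * Real.exp (c * t)) := by ring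
    _ = Real.exp c * 6 / c ^ 3 := by rw [h6, mul_one]

end Aux

set_option maxHeartbeats 1000000 in
theorem lam_integral_tendsto_atTop_xi
    (kBT hvF : ℝ) (hkBT : 0 < kBT) (hhvF : 0 < hvF)
    (a b : ℝ) (ha : 0 ≤ a) (hb : 0 ≤ b)
    (f : EuclideanSpace ℝ (Fin 2) → ℝ) (hfmeas : Measurable f)
    (hf01 : ∀ k, 0 ≤ f k ∧ f k ≤ 1)
    (hint : Integrable (fun k => hvF * ‖k‖ * f k) volume) :
    Tendsto (fun ξ => ∫ k : EuclideanSpace ℝ (Fin 2),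
        lam kBT (hvF * ‖k‖) ξ a b (f k)) atTop
      (nhds (-∫ k : EuclideanSpace ℝ (Fin 2),
        ((a + 1) * (hvF * ‖k‖ + b) * (Real.exp (b / kBT))⁻¹ +
          a * Real.exp (b / kBT) * max (hvF * ‖k‖ - b) 0) * f k)) ∧
      (¬ (f =ᵐ[volume] 0) →
        -∫ k : EuclideanSpace ℝ (Fin 2),
          ((a + 1) * (hvF * ‖k‖ + b) * (Real.exp (b / kBT))⁻¹ +
            a * Real.exp (b / kBT) * max (hvF * ‖k‖ - b) 0) * f k < 0) := by
  set L : EuclideanSpace ℝ (Fin 2) → ℝ := fun k =>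
    ((a + 1) * (hvF * ‖k‖ + b) * (Real.exp (b / kBT))⁻¹ +
      a * Real.exp (b / kBT) * max (hvF * ‖k‖ - b) 0) * f k with hL
  have hε : ∀ k : EuclideanSpace ℝ (Fin 2), 0 ≤ hvF * ‖k‖ := fun k => by positivity
  -- integrability of f
  have hball_int : Integrable
      ((Metric.closedBall (0 : EuclideanSpace ℝ (Fin 2)) (1 / hvF)).indicator
        (fun _ => (1 : ℝ))) volume := by
    rw [integrable_indicator_iff measurableSet_closedBall]
    exact integrableOn_const measure_closedBall_lt_top.ne
  have hf_int : Integrable f volume := by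
    refine (hint.add hball_int).mono' hfmeas.aestronglyMeasurable
      (ae_of_all _ fun k => ?_)
    rw [Real.norm_eq_abs, abs_of_nonneg (hf01 k).1]
    by_cases h : ‖k‖ ≤ 1 / hvF
    · have hi : (Metric.closedBall (0 : EuclideanSpace ℝ (Fin 2)) (1 / hvF)).indicator
          (fun _ => (1 : ℝ)) k = 1 :=
        Set.indicator_of_mem (Metric.mem_closedBall.2 (by simpa [dist_zero_right] using h)) _
      simp only [Pi.add_apply]
      rw [hi]
      have := (hf01 k).2
      have h2 : 0 ≤ hvF * ‖k‖ * f k := mul_nonneg (hε k) (hf01 k).1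
      linarith
    · have hi : (Metric.closedBall (0 : EuclideanSpace ℝ (Fin 2)) (1 / hvF)).indicator
          (fun _ => (1 : ℝ)) k = 0 :=
        Set.indicator_of_notMem (fun hmem => h (by simpa [dist_zero_right] using hmem)) _
      simp only [Pi.add_apply]
      rw [hi]
      have h1 : 1 ≤ hvF * ‖k‖ := by
        rw [not_le] at h
        rw [div_lt_iff₀ hhvF] at h
        nlinarith
      nlinarith [(hf01 k).1]
  -- integrability of max(ε-b,0) * f
  have hmf_int : Integrable (fun k : EuclideanSpace ℝ (Fin 2) =>
      max (hvF * ‖k‖ - b) 0 * f k) volume := by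
    refine hint.mono' (Measurable.aestronglyMeasurable (by fun_prop)) (ae_of_all _ fun k => ?_)
    rw [Real.norm_eq_abs, abs_of_nonneg (mul_nonneg (le_max_right _ _) (hf01 k).1)]
    exact mul_le_mul_of_nonneg_right (max_le (by linarith [hε k]) (hε k)) (hf01 k).1
  -- integrability of L
  have hL_int : Integrable L volume := by
    have h := ((hint.const_mul ((a + 1) * (Real.exp (b / kBT))⁻¹)).add
      (hf_int.const_mul ((a + 1) * b * (Real.exp (b / kBT))⁻¹))).add
      (hmf_int.const_mul (a * Real.exp (b / kBT)))
    refine h.congr (ae_of_all _ fun k => ?_)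
    simp only [hL, Pi.add_apply]
    ring
  -- integrable exponential bound
  have hexp_int : Integrable (fun k : EuclideanSpace ℝ (Fin 2) =>
      Real.exp (-(hvF * ‖k‖ / (2 * kBT)))) volume := by
    have heq : (fun k : EuclideanSpace ℝ (Fin 2) => Real.exp (-(hvF / (2 * kBT) * ‖k‖)))
        = fun k : EuclideanSpace ℝ (Fin 2) => Real.exp (-(hvF * ‖k‖ / (2 * kBT))) := by
      funext k
      congr 1
      ring
    rw [← heq]
    exact aux_int_exp _ (by positivity)
  set G : EuclideanSpace ℝ (Fin 2) → ℝ := fun k =>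
    (2 * kBT * (a + 1) + 2 * kBT * a * Real.exp (b / (2 * kBT))) *
      Real.exp (-(hvF * ‖k‖ / (2 * kBT))) + L k with hG
  have hG_int : Integrable G volume :=
    (hexp_int.const_mul _).add hL_int
  have hmeasF : ∀ ξ : ℝ, AEStronglyMeasurable
      (fun k : EuclideanSpace ℝ (Fin 2) => lam kBT (hvF * ‖k‖) ξ a b (f k)) volume := by
    intro ξ
    apply Measurable.aestronglyMeasurable
    unfold lam psi
    fun_prop
  have htend : Tendsto (fun ξ => ∫ k : EuclideanSpace ℝ (Fin 2),
      lam kBT (hvF * ‖k‖) ξ a b (f k)) atTop (nhds (-∫ k, L k)) := by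
    rw [show (-∫ k, L k) = ∫ k, -(L k) from (integral_neg L).symm]
    refine tendsto_integral_filter_of_dominated_convergence G
      (Eventually.of_forall hmeasF) ?_ hG_int ?_
    · filter_upwards [eventually_ge_atTop (1 : ℝ)] with ξ hξ
      refine ae_of_all _ fun k => ?_
      have hb1 := lam_abs_le kBT a b (f k) (hvF * ‖k‖) ξ hkBT ha hb (hε k)
        (hf01 k).1 (hf01 k).2 hξ
      rw [Real.norm_eq_abs]
      exact hb1
    · exact ae_of_all _ fun k => lam_tendsto kBT a b (f k) (hvF * ‖k‖) hkBT
  refine ⟨htend, fun hne => ?_⟩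
  have hLnn : ∀ k, 0 ≤ L k := fun k => by
    apply mul_nonneg _ (hf01 k).1
    have h1 : 0 ≤ (a + 1) * (hvF * ‖k‖ + b) * (Real.exp (b / kBT))⁻¹ :=
      mul_nonneg (mul_nonneg (by linarith) (by linarith [hε k]))
        (inv_nonneg.2 (Real.exp_pos _).le)
    have h2 : 0 ≤ a * Real.exp (b / kBT) * max (hvF * ‖k‖ - b) 0 :=
      mul_nonneg (mul_nonneg ha (Real.exp_pos _).le) (le_max_right _ _)
    linarith
  have hsupp0 : volume (Function.support f) ≠ 0 := by
    intro h0
    apply hne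
    have hae : ∀ᵐ k ∂(volume : Measure (EuclideanSpace ℝ (Fin 2))), f k = 0 := by
      rw [ae_iff]
      exact h0
    filter_upwards [hae] with k hk
    simpa using hk
  have hsub : Function.support f \ {0} ⊆ Function.support L := by
    intro k hk
    obtain ⟨hkf, hk0⟩ := hk
    have hknorm : 0 < ‖k‖ := norm_pos_iff.2 (by simpa using hk0)
    have hcoef : 0 < (a + 1) * (hvF * ‖k‖ + b) * (Real.exp (b / kBT))⁻¹ +
        a * Real.exp (b / kBT) * max (hvF * ‖k‖ - b) 0 := by
      have h1 : 0 < (a + 1) * (hvF * ‖k‖ + b) * (Real.exp (b / kBT))⁻¹ := by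
        apply mul_pos (mul_pos (by linarith) (by nlinarith))
        exact inv_pos.2 (Real.exp_pos _)
      have h2 : 0 ≤ a * Real.exp (b / kBT) * max (hvF * ‖k‖ - b) 0 :=
        mul_nonneg (mul_nonneg ha (Real.exp_pos _).le) (le_max_right _ _)
      linarith
    simp only [Function.mem_support, hL]
    exact mul_ne_zero hcoef.ne' (Function.mem_support.1 hkf)
  have hmeaspos : 0 < volume (Function.support L) := by
    calc (0 : ENNReal) < volume (Function.support f) := zero_lt_iff.2 hsupp0
      _ = volume (Function.support f \ {0}) := (measure_diff_null (measure_singleton 0)).symm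
      _ ≤ volume (Function.support L) := measure_mono hsub
  have hLpos : 0 < ∫ k, L k :=
    (integral_pos_iff_support_of_nonneg hLnn hL_int).2 hmeaspos
  linarith
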